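/- Let X and Y be measurable spaces, μ a probability measure on X, T : X → X a measurable μ-preserving map, φ : X → Y measurable with pushforward measure ν = φ_*μ, and T' : Y → Y a measurable ν-preserving map with φ ∘ T = T' ∘ φ. If the linear span of the eigenvectors of the Koopman operator U_T : L²(X,μ) → L²(X,μ), U_T f = f ∘ T, is dense in L²(X,μ), then the linear span of the eigenvectors of the Koopman operator U_{T'} : L²(Y,ν) → L²(Y,ν), U_{T'} g = g ∘ T', is dense in L²(Y,ν). (If X has pure point dynamical spectrum, then so does any factor Y.) -/

import Mathlib

open MeasureTheory
open scoped InnerProductSpace ComplexConjugate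

set_option maxHeartbeats 1000000 in
lemma eigen_span_dense_in_invariant_subspace
    {H : Type*} [NormedAddCommGroup H] [InnerProductSpace ℂ H] [CompleteSpace H]
    (U : H →ₗᵢ[ℂ] H)
    (hdense : Dense ((Submodule.span ℂ {f : H | f ≠ 0 ∧ ∃ c : ℂ, U f = c • f}) : Set H))
    (K : Submodule ℂ H) (hKc : IsClosed (K : Set H)) (hKU : ∀ f ∈ K, U f ∈ K)
    {h : H} (hh : h ∈ K) :
    h ∈ closure ((Submodule.span ℂ
      ({f : H | f ≠ 0 ∧ ∃ c : ℂ, U f = c • f} ∩ (K : Set H))) : Set H) := by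
  set E : Set H := {f : H | f ≠ 0 ∧ ∃ c : ℂ, U f = c • f} with hEdef
  -- eigenvalues have modulus one
  have hnorm1 : ∀ {f : H} {c : ℂ}, f ≠ 0 → U f = c • f → ‖c‖ = 1 := by
    intro f c hf0 hfc
    have h1 : ‖c‖ * ‖f‖ = ‖f‖ := by
      rw [← norm_smul, ← hfc, U.norm_map]
    have h2 : ‖f‖ ≠ 0 := norm_ne_zero_iff.mpr hf0
    nth_rewrite 2 [← one_mul ‖f‖] at h1
    exact mul_right_cancel₀ h2 h1
  -- U is surjective
  have hsurj : Function.Surjective U := by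
    have hcl : IsClosed (Set.range ⇑U) := U.isometry.isClosedEmbedding.isClosed_range
    have hsub : ((Submodule.span ℂ E : Submodule ℂ H) : Set H) ⊆ Set.range ⇑U := by
      have hle : Submodule.span ℂ E ≤ LinearMap.range U.toLinearMap := by
        rw [Submodule.span_le]
        rintro f ⟨hf0, c, hfc⟩
        have hc0 : c ≠ 0 := by
          intro hc; rw [hc] at hfc
          simpa [hfc] using hnorm1 hf0 hfc
        exact ⟨c⁻¹ • f, by
          rw [LinearIsometry.coe_toLinearMap, _root_.map_smul, hfc, smul_smul,
            inv_mul_cancel₀ hc0, one_smul]⟩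
      intro x hx
      rcases hle hx with ⟨y, hy⟩
      exact ⟨y, hy⟩
    intro y
    have hy : y ∈ closure ((Submodule.span ℂ E : Submodule ℂ H) : Set H) := hdense y
    have := closure_mono hsub hy
    rwa [hcl.closure_eq] at this
  let Ue : H ≃ₗᵢ[ℂ] H := LinearIsometryEquiv.ofSurjective U hsurj
  have hUe : ∀ x, Ue x = U x := fun x => by
    simp [Ue, LinearIsometryEquiv.coe_ofSurjective]
  -- inverse on eigenvectors
  have hsymm : ∀ {p : H} {c : ℂ}, ‖c‖ = 1 → U p = c • p → Ue.symm p = (conj c) • p := by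
    intro p c hc1 hpc
    have h1 : Ue p = c • p := by rw [hUe, hpc]
    have h2 : c • Ue.symm p = p := by
      rw [← _root_.map_smul, ← h1, Ue.symm_apply_apply]
    have hcc : c * conj c = 1 := by
      rw [RCLike.mul_conj, hc1]; norm_num
    calc Ue.symm p = (conj c) • (c • Ue.symm p) := by
          rw [smul_smul, mul_comm, hcc, one_smul]
      _ = (conj c) • p := by rw [h2]
  -- inner-product invariance against an eigenvector
  have hinner : ∀ {p : H} {c : ℂ}, ‖c‖ = 1 → U p = c • p →
      ∀ x : H, ⟪p, (conj c) • U x⟫_ℂ = ⟪p, x⟫_ℂ := by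
    intro p c hc1 hpc x
    have h1 : ⟪p, U x⟫_ℂ = c * ⟪p, x⟫_ℂ := by
      calc ⟪p, U x⟫_ℂ = ⟪Ue (Ue.symm p), Ue x⟫_ℂ := by rw [Ue.apply_symm_apply, hUe]
        _ = ⟪Ue.symm p, x⟫_ℂ := Ue.inner_map_map _ _
        _ = ⟪(conj c) • p, x⟫_ℂ := by rw [hsymm hc1 hpc]
        _ = c * ⟪p, x⟫_ℂ := by rw [inner_smul_left, Complex.conj_conj]
    rw [inner_smul_right, h1, ← mul_assoc]
    have hcc : conj c * c = 1 := by
      rw [mul_comm, RCLike.mul_conj, hc1]; norm_num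
    rw [hcc, one_mul]
  -- decompose h along the closure of the span of eigenvectors lying in K
  set M : Submodule ℂ H := (Submodule.span ℂ (E ∩ (K : Set H))).topologicalClosure with hMdef
  have hMcl : IsClosed (M : Set H) :=
    (Submodule.span ℂ (E ∩ (K : Set H))).isClosed_topologicalClosure
  haveI : CompleteSpace M := hMcl.completeSpace_coe
  obtain ⟨m, hm, w, hw, hmw⟩ := M.exists_add_mem_mem_orthogonal h
  have hMK : M ≤ K :=
    Submodule.topologicalClosure_minimal _ (Submodule.span_le.mpr Set.inter_subset_right) hKc
  have hwK : w ∈ K := by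
    have hws : w = h - m := by rw [hmw]; abel
    rw [hws]; exact K.sub_mem hh (hMK hm)
  -- every eigenvector is orthogonal to w
  have hfw : ∀ f ∈ E, ⟪f, w⟫_ℂ = 0 := by
    rintro f ⟨hf0, c, hfc⟩
    have hc1 : ‖c‖ = 1 := hnorm1 hf0 hfc
    set S : H → H := fun x => (conj c) • U x with hSdef
    set W : Set H := Set.range (fun n => S^[n] w) with hWdef
    set C : Set H := closure (convexHull ℝ W) with hCdef
    have hC_conv : Convex ℝ C := (convex_convexHull ℝ W).closure
    have hWC : W ⊆ C := (subset_convexHull ℝ W).trans subset_closure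
    have hwC : w ∈ C := hWC ⟨0, rfl⟩
    have hKconv : Convex ℝ (K : Set H) := by
      have := (K.restrictScalars ℝ).convex
      simpa using this
    have hSK : ∀ x ∈ K, S x ∈ K := fun x hx => K.smul_mem _ (hKU x hx)
    have hWK : ∀ n : ℕ, S^[n] w ∈ K := by
      intro n; induction n with
      | zero => simpa using hwK
      | succ n ih => rw [Function.iterate_succ_apply']; exact hSK _ ih
    have hCK : C ⊆ (K : Set H) :=
      closure_minimal (convexHull_min (by rintro x ⟨n, rfl⟩; exact hWK n) hKconv) hKc
    have hScont : Continuous S := U.continuous.const_smul _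
    let Sl : H →ₗ[ℝ] H := ((conj c) • U.toContinuousLinearMap).toLinearMap.restrictScalars ℝ
    have hSl : ⇑Sl = S := by funext x; simp [Sl, hSdef]
    have hSC : ∀ x ∈ C, S x ∈ C := by
      have hD : convexHull ℝ W ⊆ S ⁻¹' C :=
        convexHull_min
          (by rintro x ⟨n, rfl⟩
              simp only [Set.mem_preimage]
              exact hWC ⟨n + 1, Function.iterate_succ_apply' S n w⟩)
          (by rw [← hSl]; exact hC_conv.linear_preimage Sl)
      exact fun x hx => closure_minimal hD (isClosed_closure.preimage hScont) hx
    -- the minimal norm point of C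
    letI : InnerProductSpace ℝ H := InnerProductSpace.complexToReal
    obtain ⟨p, hpC, hpmin⟩ := exists_norm_eq_iInf_of_complete_convex ⟨w, hwC⟩
      isClosed_closure.isComplete hC_conv (0 : H)
    set mv : ℝ := ⨅ x : C, ‖(0 : H) - (x : H)‖ with hmv
    have hpnorm : ‖p‖ = mv := by rw [← hpmin, zero_sub, norm_neg]
    have hble : BddBelow (Set.range fun x : C => ‖(0 : H) - (x : H)‖) :=
      ⟨0, by rintro y ⟨x, rfl⟩; positivity⟩
    have hSpC : S p ∈ C := hSC p hpC
    have hSp_norm : ‖S p‖ = ‖p‖ := by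
      rw [hSdef]; simp only [norm_smul, RCLike.norm_conj, hc1, one_mul, U.norm_map]
    have hqC : (1/2 : ℝ) • p + (1/2 : ℝ) • S p ∈ C :=
      hC_conv hpC hSpC (by norm_num) (by norm_num) (by norm_num)
    have hqm : mv ≤ ‖(1/2 : ℝ) • p + (1/2 : ℝ) • S p‖ := by
      have := ciInf_le hble (⟨_, hqC⟩ : C)
      rwa [zero_sub, norm_neg] at this
    have hps : S p = p := by
      have hpar := parallelogram_law_with_norm ℂ p (S p)
      have hq2 : ‖(1/2 : ℝ) • p + (1/2 : ℝ) • S p‖ = (1/2 : ℝ) * ‖p + S p‖ := by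
        rw [← smul_add, norm_smul]; norm_num
      have hmv0 : 0 ≤ mv := hpnorm ▸ norm_nonneg p
      have hzero : ‖p - S p‖ = 0 := by
        nlinarith [norm_nonneg (p - S p), norm_nonneg (p + S p), hqm, hq2, hpar,
          hSp_norm, hpnorm]
      have := norm_eq_zero.mp hzero
      have := sub_eq_zero.mp this
      exact this.symm
    have hUp : U p = c • p := by
      have h1 : (conj c) • U p = p := hps
      calc U p = (c * conj c) • U p := by
            rw [RCLike.mul_conj, hc1]; norm_num
        _ = c • ((conj c) • U p) := by rw [smul_smul]
        _ = c • p := by rw [h1]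
    -- inner products against eigenvectors of eigenvalue c are constant on C
    have hconst : ∀ g : H, U g = c • g → ∀ x ∈ C, ⟪g, x⟫_ℂ = ⟪g, w⟫_ℂ := by
      intro g hg
      have hWm : ∀ n, ⟪g, S^[n] w⟫_ℂ = ⟪g, w⟫_ℂ := by
        intro n; induction n with
        | zero => simp
        | succ n ih =>
          rw [Function.iterate_succ_apply']
          exact (hinner hc1 hg _).trans ih
      have hDconv : Convex ℝ {x : H | ⟪g, x⟫_ℂ = ⟪g, w⟫_ℂ} := by
        have hset : {x : H | ⟪g, x⟫_ℂ = ⟪g, w⟫_ℂ}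
            = ((innerSL ℂ g).toLinearMap.restrictScalars ℝ) ⁻¹' {⟪g, w⟫_ℂ} := by
          ext x; simp
        rw [hset]
        exact (convex_singleton _).linear_preimage _
      have hDclosed : IsClosed {x : H | ⟪g, x⟫_ℂ = ⟪g, w⟫_ℂ} :=
        isClosed_eq (continuous_const.inner continuous_id) continuous_const
      intro x hx
      exact closure_minimal (convexHull_min (by rintro y ⟨n, rfl⟩; exact hWm n) hDconv)
        hDclosed hx
    have hp0 : p = 0 := by
      by_contra hp0
      have hpEK : p ∈ E ∩ (K : Set H) := ⟨⟨hp0, c, hUp⟩, hCK hpC⟩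
      have hpM : p ∈ M := Submodule.le_topologicalClosure _ (Submodule.subset_span hpEK)
      have h1 : ⟪p, w⟫_ℂ = 0 := (Submodule.mem_orthogonal M w).mp hw p hpM
      have h2 : ⟪p, p⟫_ℂ = ⟪p, w⟫_ℂ := hconst p hUp p hpC
      exact hp0 (inner_self_eq_zero.mp (h2.trans h1))
    have hfp := hconst f hfc p hpC
    rw [hp0] at hfp
    simpa using hfp.symm
  -- hence w = 0
  have hw0 : w = 0 := by
    have hspan : ∀ v ∈ Submodule.span ℂ E, ⟪v, w⟫_ℂ = 0 := by
      intro v hv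
      induction hv using Submodule.span_induction with
      | mem x hx => exact hfw x hx
      | zero => simp
      | add x y _ _ hx hy => rw [inner_add_left, hx, hy, add_zero]
      | smul a x _ hx => rw [inner_smul_left, hx, mul_zero]
    apply Dense.eq_zero_of_inner_left ℂ hdense
    intro v hv
    rw [← inner_conj_symm, hspan v hv, map_zero]
  rw [hmw, hw0, add_zero]
  rw [← Submodule.topologicalClosure_coe]
  exact hm

set_option maxHeartbeats 1000000 in
/-- If the span of the Koopman eigenvectors of `(X, μ, T)` is dense in
`L²(X, μ)` (pure point dynamical spectrum), and `(Y, ν, T')` is a factor via `φ`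
(with `ν = φ_*μ`, `φ ∘ T = T' ∘ φ`), then the span of the Koopman eigenvectors of
`(Y, ν, T')` is dense in `L²(Y, ν)`.  An eigenvector is a nonzero `f ∈ L²` with
`f ∘ T = c·f` almost everywhere, for some `c : ℂ`. -/
theorem factor_pure_point_spectrum
    {X Y : Type*} [MeasurableSpace X] [MeasurableSpace Y]
    (μ : Measure X) [IsProbabilityMeasure μ]
    (T : X → X) (hTmeas : Measurable T) (hT : MeasurePreserving T μ μ)
    (φ : X → Y) (hφ : Measurable φ)
    (ν : Measure Y) (hν : ν = μ.map φ)
    (T' : Y → Y) (hT'meas : Measurable T') (hT' : MeasurePreserving T' ν ν)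
    (hcomm : φ ∘ T = T' ∘ φ)
    (hdense : Dense (↑(Submodule.span ℂ
        {f : Lp ℂ 2 μ | f ≠ 0 ∧ ∃ c : ℂ,
          (fun x => (f : X → ℂ) (T x)) =ᵐ[μ] fun x => c * (f : X → ℂ) x})
      : Set (Lp ℂ 2 μ))) :
    Dense (↑(Submodule.span ℂ
        {g : Lp ℂ 2 ν | g ≠ 0 ∧ ∃ c : ℂ,
          (fun y => (g : Y → ℂ) (T' y)) =ᵐ[ν] fun y => c * (g : Y → ℂ) y})
      : Set (Lp ℂ 2 ν)) := by
  have hφmp : MeasurePreserving φ μ ν := ⟨hφ, hν.symm⟩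
  set V : Lp ℂ 2 ν →ₗᵢ[ℂ] Lp ℂ 2 μ := Lp.compMeasurePreservingₗᵢ ℂ φ hφmp with hVdef
  set Uμ : Lp ℂ 2 μ →ₗᵢ[ℂ] Lp ℂ 2 μ := Lp.compMeasurePreservingₗᵢ ℂ T hT with hUμdef
  set Uν : Lp ℂ 2 ν →ₗᵢ[ℂ] Lp ℂ 2 ν := Lp.compMeasurePreservingₗᵢ ℂ T' hT' with hUνdef
  -- the eigenvector conditions in operator form
  have keyμ : ∀ (f : Lp ℂ 2 μ) (c : ℂ), Uμ f = c • f ↔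
      ((fun x => (f : X → ℂ) (T x)) =ᵐ[μ] fun x => c * (f : X → ℂ) x) := by
    intro f c
    constructor
    · intro hEq
      have h1 : ⇑(Uμ f) =ᵐ[μ] (⇑f) ∘ T := Lp.coeFn_compMeasurePreserving f hT
      have h2 : ⇑(c • f) =ᵐ[μ] fun x => c • (f : X → ℂ) x := Lp.coeFn_smul c f
      have h3 : (⇑f) ∘ T =ᵐ[μ] fun x => c • (f : X → ℂ) x := by
        refine h1.symm.trans ?_
        rw [hEq]; exact h2
      filter_upwards [h3] with x hx
      simpa [Function.comp, smul_eq_mul] using hx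
    · intro hae
      refine Lp.ext ?_
      refine (Lp.coeFn_compMeasurePreserving f hT).trans ?_
      refine Filter.EventuallyEq.trans ?_ (Lp.coeFn_smul c f).symm
      filter_upwards [hae] with x hx
      simpa [Function.comp, smul_eq_mul] using hx
  have keyν : ∀ (g : Lp ℂ 2 ν) (c : ℂ), Uν g = c • g ↔
      ((fun y => (g : Y → ℂ) (T' y)) =ᵐ[ν] fun y => c * (g : Y → ℂ) y) := by
    intro g c
    constructor
    · intro hEq
      have h1 : ⇑(Uν g) =ᵐ[ν] (⇑g) ∘ T' := Lp.coeFn_compMeasurePreserving g hT'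
      have h2 : ⇑(c • g) =ᵐ[ν] fun y => c • (g : Y → ℂ) y := Lp.coeFn_smul c g
      have h3 : (⇑g) ∘ T' =ᵐ[ν] fun y => c • (g : Y → ℂ) y := by
        refine h1.symm.trans ?_
        rw [hEq]; exact h2
      filter_upwards [h3] with y hy
      simpa [Function.comp, smul_eq_mul] using hy
    · intro hae
      refine Lp.ext ?_
      refine (Lp.coeFn_compMeasurePreserving g hT').trans ?_
      refine Filter.EventuallyEq.trans ?_ (Lp.coeFn_smul c g).symm
      filter_upwards [hae] with y hy
      simpa [Function.comp, smul_eq_mul] using hy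
  -- rewrite the eigenvector sets
  have hEμ : {f : Lp ℂ 2 μ | f ≠ 0 ∧ ∃ c : ℂ,
        (fun x => (f : X → ℂ) (T x)) =ᵐ[μ] fun x => c * (f : X → ℂ) x}
      = {f : Lp ℂ 2 μ | f ≠ 0 ∧ ∃ c : ℂ, Uμ f = c • f} := by
    ext f
    simp only [Set.mem_setOf_eq]
    constructor
    · rintro ⟨h0, c, hc⟩; exact ⟨h0, c, (keyμ f c).mpr hc⟩
    · rintro ⟨h0, c, hc⟩; exact ⟨h0, c, (keyμ f c).mp hc⟩
  have hEν : {g : Lp ℂ 2 ν | g ≠ 0 ∧ ∃ c : ℂ,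
        (fun y => (g : Y → ℂ) (T' y)) =ᵐ[ν] fun y => c * (g : Y → ℂ) y}
      = {g : Lp ℂ 2 ν | g ≠ 0 ∧ ∃ c : ℂ, Uν g = c • g} := by
    ext g
    simp only [Set.mem_setOf_eq]
    constructor
    · rintro ⟨h0, c, hc⟩; exact ⟨h0, c, (keyν g c).mpr hc⟩
    · rintro ⟨h0, c, hc⟩; exact ⟨h0, c, (keyν g c).mp hc⟩
  rw [hEμ] at hdense
  rw [hEν]
  -- the intertwining relation
  have hcomm' : ∀ x, φ (T x) = T' (φ x) := fun x => congrFun hcomm x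
  have hVcoe : ∀ g : Lp ℂ 2 ν, ⇑(V g) =ᵐ[μ] (⇑g) ∘ φ :=
    fun g => Lp.coeFn_compMeasurePreserving g hφmp
  have hVU : ∀ g : Lp ℂ 2 ν, Uμ (V g) = V (Uν g) := by
    intro g
    refine Lp.ext ?_
    have h1 : ⇑(Uμ (V g)) =ᵐ[μ] (⇑(V g)) ∘ T := Lp.coeFn_compMeasurePreserving _ hT
    have h2 : (⇑(V g)) ∘ T =ᵐ[μ] ((⇑g) ∘ φ) ∘ T :=
      hT.quasiMeasurePreserving.ae_eq_comp (hVcoe g)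
    have h3 : ((⇑g) ∘ φ) ∘ T = ((⇑g) ∘ T') ∘ φ :=
      funext fun x => by simp [Function.comp, hcomm' x]
    have h4 : ⇑(V (Uν g)) =ᵐ[μ] (⇑(Uν g)) ∘ φ := hVcoe _
    have h5 : (⇑(Uν g)) ∘ φ =ᵐ[μ] ((⇑g) ∘ T') ∘ φ :=
      hφmp.quasiMeasurePreserving.ae_eq_comp (Lp.coeFn_compMeasurePreserving g hT')
    calc ⇑(Uμ (V g)) =ᵐ[μ] ((⇑g) ∘ T') ∘ φ := h1.trans (h2.trans (by rw [h3]))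
      _ =ᵐ[μ] ⇑(V (Uν g)) := (h4.trans h5).symm
  -- the range of V
  set K : Submodule ℂ (Lp ℂ 2 μ) := LinearMap.range V.toLinearMap with hKdef
  have hKc : IsClosed (K : Set (Lp ℂ 2 μ)) := by
    have hKr : (K : Set (Lp ℂ 2 μ)) = Set.range ⇑V := by
      ext x
      simp [hKdef, LinearMap.mem_range]
    rw [hKr]
    exact V.isometry.isClosedEmbedding.isClosed_range
  have hKU : ∀ f ∈ K, Uμ f ∈ K := by
    rintro f ⟨g, rfl⟩
    exact ⟨Uν g, (hVU g).symm⟩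
  -- apply the abstract lemma
  intro g
  have hVg : V g ∈ K := ⟨g, rfl⟩
  have hmain := eigen_span_dense_in_invariant_subspace Uμ hdense K hKc hKU hVg
  have h1 : {f : Lp ℂ 2 μ | f ≠ 0 ∧ ∃ c : ℂ, Uμ f = c • f} ∩ (K : Set (Lp ℂ 2 μ))
      ⊆ ⇑V '' {g : Lp ℂ 2 ν | g ≠ 0 ∧ ∃ c : ℂ, Uν g = c • g} := by
    rintro f ⟨⟨hf0, c, hfc⟩, g', rfl⟩
    simp only [LinearIsometry.coe_toLinearMap] at hf0 hfc ⊢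
    refine ⟨g', ⟨?_, c, ?_⟩, rfl⟩
    · rintro rfl; simp at hf0
    · have hVeq : V (Uν g') = V (c • g') := by
        rw [← hVU g', hfc, _root_.map_smul]
      exact V.injective hVeq
  have hsub : ((Submodule.span ℂ
        ({f : Lp ℂ 2 μ | f ≠ 0 ∧ ∃ c : ℂ, Uμ f = c • f} ∩ (K : Set (Lp ℂ 2 μ)))) :
          Set (Lp ℂ 2 μ))
      ⊆ ⇑V '' ((Submodule.span ℂ {g : Lp ℂ 2 ν | g ≠ 0 ∧ ∃ c : ℂ, Uν g = c • g}) :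
          Set (Lp ℂ 2 ν)) := by
    intro x hx
    have h2 := Submodule.span_mono h1 hx
    erw [Submodule.span_image V.toLinearMap] at h2
    rcases h2 with ⟨y, hy, rfl⟩
    exact ⟨y, hy, rfl⟩
  have hVgcl : V g ∈ closure (⇑V ''
      ((Submodule.span ℂ {g : Lp ℂ 2 ν | g ≠ 0 ∧ ∃ c : ℂ, Uν g = c • g}) :
        Set (Lp ℂ 2 ν))) := closure_mono hsub hmain
  rw [Metric.mem_closure_iff] at hVgcl ⊢
  intro ε hε
  obtain ⟨b, hbmem, hb⟩ := hVgcl ε hε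
  obtain ⟨y, hy, rfl⟩ := hbmem
  refine ⟨y, hy, ?_⟩
  rwa [V.isometry.dist_eq] at hb
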